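/- Let μ ∈ ℝ, let e, q : ℝ → ℝ³ be twice differentiable with ‖e(t)‖ = 1 for all t, let ρ : ℝ → ℝ be twice differentiable, and set r(t) = q(t) + ρ(t)·e(t). Fix t ∈ ℝ, assume r(t) ≠ 0 and that r̈(t) = −(μ/‖r(t)‖³)·r(t). Then ρ̈(t) − ρ(t)‖ė(t)‖² + q̈(t)·e(t) + μ(r(t)·e(t))/‖r(t)‖³ = 0. -/

import Mathlib

open Real RealInnerProductSpace

/-- Projection of Newton's equation on the line of sight. -/
theorem newton_projection_los (μ : ℝ)
    (e q : ℝ → EuclideanSpace ℝ (Fin 3)) (ρ : ℝ → ℝ)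
    (he : Differentiable ℝ e) (he' : Differentiable ℝ (deriv e))
    (hq : Differentiable ℝ q) (hq' : Differentiable ℝ (deriv q))
    (hρ : Differentiable ℝ ρ) (hρ' : Differentiable ℝ (deriv ρ))
    (hunit : ∀ t, ‖e t‖ = 1)
    (r : ℝ → EuclideanSpace ℝ (Fin 3)) (hr : ∀ t, r t = q t + ρ t • e t)
    (t : ℝ) (hrt : r t ≠ 0)
    (hNewton : deriv (deriv r) t = -(μ / ‖r t‖ ^ 3) • r t) :
    deriv (deriv ρ) t - ρ t * ‖deriv e t‖ ^ 2 + ⟪deriv (deriv q) t, e t⟫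
      + μ * ⟪r t, e t⟫ / ‖r t‖ ^ 3 = 0 := by
  -- ⟪e, e⟫ is constantly 1
  have hee : (fun u => ⟪e u, e u⟫) = fun _ => (1 : ℝ) := by
    funext u
    rw [real_inner_self_eq_norm_sq, hunit u]; norm_num
  -- ⟪e, e'⟫ = 0 everywhere
  have h1 : ∀ s, ⟪e s, deriv e s⟫ = 0 := by
    intro s
    have hd := deriv_inner_apply ℝ (he s) (he s) (x := s)
    rw [hee, deriv_const] at hd
    have hsymm : ⟪deriv e s, e s⟫ = ⟪e s, deriv e s⟫ := real_inner_comm _ _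
    linarith [hd, hsymm]
  -- ⟪e, e''⟫ = -‖e'‖²
  have h2 : ⟪e t, deriv (deriv e) t⟫ = -‖deriv e t‖ ^ 2 := by
    have hz : (fun u => ⟪e u, deriv e u⟫) = fun _ => (0 : ℝ) := funext h1
    have hd := deriv_inner_apply ℝ (he t) (he' t) (x := t)
    rw [hz, deriv_const] at hd
    have : ⟪deriv e t, deriv e t⟫ = ‖deriv e t‖ ^ 2 := real_inner_self_eq_norm_sq _
    linarith [hd, this]
  -- first derivative of r
  have hrfun : r = fun s => q s + ρ s • e s := funext hr
  have hr1 : deriv r = fun s => deriv q s + (ρ s • deriv e s + deriv ρ s • e s) := by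
    funext s
    rw [hrfun, deriv_fun_add (g := fun s => ρ s • e s) (hq s) ((hρ s).smul (he s)), deriv_fun_smul (hρ s) (he s)]
  -- second derivative of r
  have hr2 : deriv (deriv r) t = deriv (deriv q) t
      + ((ρ t • deriv (deriv e) t + deriv ρ t • deriv e t)
        + (deriv ρ t • deriv e t + deriv (deriv ρ) t • e t)) := by
    rw [hr1]
    rw [deriv_fun_add (g := fun s => ρ s • deriv e s + deriv ρ s • e s) (hq' t) (((hρ.smul he').add (hρ'.smul he)) t),
      deriv_fun_add (f := fun s => ρ s • deriv e s) (g := fun s => deriv ρ s • e s) ((hρ.smul he') t) ((hρ'.smul he) t),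
      deriv_fun_smul (hρ t) (he' t), deriv_fun_smul (hρ' t) (he t)]
  -- project Newton's equation on e
  have hproj : ⟪e t, deriv (deriv r) t⟫ = -(μ / ‖r t‖ ^ 3) * ⟪e t, r t⟫ := by
    rw [hNewton, real_inner_smul_right]
  have hexp : ⟪e t, deriv (deriv r) t⟫
      = ⟪e t, deriv (deriv q) t⟫ + (ρ t * (-‖deriv e t‖ ^ 2)
        + deriv ρ t * 0 + (deriv ρ t * 0 + deriv (deriv ρ) t * 1)) := by
    rw [hr2]
    simp only [inner_add_right, real_inner_smul_right]
    rw [h1 t, h2]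
    have h3 : ⟪e t, e t⟫ = (1 : ℝ) := by
      have := congrFun hee t; simpa using this
    rw [h3]
  have hA : ‖r t‖ ^ 3 ≠ 0 := pow_ne_zero 3 (norm_ne_zero_iff.mpr hrt)
  have hsym1 : ⟪deriv (deriv q) t, e t⟫ = ⟪e t, deriv (deriv q) t⟫ := real_inner_comm _ _
  have hsym2 : ⟪r t, e t⟫ = ⟪e t, r t⟫ := real_inner_comm _ _
  rw [hsym1, hsym2]
  have key : ⟪e t, deriv (deriv q) t⟫ + (ρ t * (-‖deriv e t‖ ^ 2)
      + deriv ρ t * 0 + (deriv ρ t * 0 + deriv (deriv ρ) t * 1))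
      = -(μ / ‖r t‖ ^ 3) * ⟪e t, r t⟫ := by rw [← hexp, hproj]
  field_simp at key ⊢
  linarith [key]
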